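/- For a po-group G with strong unit u > 0, the interval Γ(G,u) = {g ∈ G : 0 ≤ g ≤ u} with the restriction of the group addition (a + b defined iff a + b ∈ [0,u]), 0, and u is a pseudo effect algebra, in which a⁻ = u − a and a∼ = −a + u. -/

import Mathlib

/-- A pseudo effect algebra: a partial algebra `(E; +, 0, 1)` where the partial
operation is modeled as `add : E → E → Option E` (`none` = undefined). -/
structure PseudoEffectAlgebra (E : Type*) where
  add : E → E → Option E
  zero : E
  one : E
  /-- (i): `a+b` and `(a+b)+c` exist iff `b+c` and `a+(b+c)` exist, and then they are equal. -/
  assoc : ∀ a b c : E, (add a b).bind (fun x => add x c) = (add b c).bind (fun x => add a x)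
  /-- (ii): there is exactly one `d` with `a + d = 1`. -/
  rcompl : ∀ a : E, ∃! d, add a d = some one
  /-- (ii): there is exactly one `e` with `e + a = 1`. -/
  lcompl : ∀ a : E, ∃! e', add e' a = some one
  /-- (iii): if `a+b` exists, then `a+b = d+a = b+e` for some `d, e`. -/
  exch : ∀ a b s : E, add a b = some s → (∃ d, add d a = some s) ∧ (∃ e', add b e' = some s)
  /-- (iv): if `1+a` exists then `a = 0`. -/
  one_add : ∀ a : E, (add one a).isSome → a = zero
  /-- (iv): if `a+1` exists then `a = 0`. -/
  add_one : ∀ a : E, (add a one).isSome → a = zero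

open Classical in
/-- The partial addition on the interval `Γ(G,u) = {g : 0 ≤ g ≤ u}` of a (not necessarily
Abelian) po-group: `a + b` is defined iff `a + b ≤ u` (then automatically `0 ≤ a + b`). -/
noncomputable def gammaAdd {G : Type*} [AddGroup G] [PartialOrder G]
    [CovariantClass G G (· + ·) (· ≤ ·)]
    [CovariantClass G G (Function.swap (· + ·)) (· ≤ ·)] (u : G) :
    {g : G // 0 ≤ g ∧ g ≤ u} → {g : G // 0 ≤ g ∧ g ≤ u} → Option {g : G // 0 ≤ g ∧ g ≤ u} :=
  fun a b =>
    if h : a.1 + b.1 ≤ u then some ⟨a.1 + b.1, add_nonneg a.2.1 b.2.1, h⟩ else none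

lemma negNonpos {G : Type*} [AddGroup G] [PartialOrder G]
    [CovariantClass G G (· + ·) (· ≤ ·)] {a : G} (h : 0 ≤ a) : -a ≤ 0 := by
  have h2 := add_le_add_right h (-a)
  rwa [add_zero, neg_add_cancel] at h2

lemma gammaAdd_eq_some_iff {G : Type*} [AddGroup G] [PartialOrder G]
    [CovariantClass G G (· + ·) (· ≤ ·)]
    [CovariantClass G G (Function.swap (· + ·)) (· ≤ ·)] (u : G)
    (a b c : {g : G // 0 ≤ g ∧ g ≤ u}) :
    gammaAdd u a b = some c ↔ a.1 + b.1 = c.1 := by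
  unfold gammaAdd
  split_ifs with h
  · constructor
    · intro hc; exact congrArg Subtype.val (Option.some.inj hc)
    · intro hc
      exact congrArg some (Subtype.ext hc)
  · simp only [false_iff]
    intro hc
    exact h (hc ▸ c.2.2)

/-- For a po-group `G` with strong unit `u > 0`, `Γ(G,u) = ([0,u]; +, 0, u)` with the
restricted addition is a pseudo effect algebra, in which `a⁻ = u − a` and `a∼ = −a + u`. -/
theorem stmt4 {G : Type*} [AddGroup G] [PartialOrder G]
    [CovariantClass G G (· + ·) (· ≤ ·)]
    [CovariantClass G G (Function.swap (· + ·)) (· ≤ ·)]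
    (u : G) (hu : 0 < u) (hstrong : ∀ g : G, ∃ n : ℕ, 1 ≤ n ∧ g ≤ n • u) :
    ∃ P : PseudoEffectAlgebra {g : G // 0 ≤ g ∧ g ≤ u},
      P.add = gammaAdd u ∧
      P.zero = ⟨0, le_refl 0, le_of_lt hu⟩ ∧
      P.one = ⟨u, le_of_lt hu, le_refl u⟩ ∧
      -- `a⁻ = u - a` : the unique left complement of `a` is `u - a`
      (∀ a b : {g : G // 0 ≤ g ∧ g ≤ u}, P.add b a = some P.one ↔ (b : G) = u - (a : G)) ∧
      -- `a∼ = -a + u` : the unique right complement of `a` is `-a + u`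
      (∀ a b : {g : G // 0 ≤ g ∧ g ≤ u}, P.add a b = some P.one ↔ (b : G) = -(a : G) + u) := by
  classical
  refine ⟨{
    add := gammaAdd u
    zero := ⟨0, le_refl 0, le_of_lt hu⟩
    one := ⟨u, le_of_lt hu, le_refl u⟩
    assoc := ?_
    rcompl := ?_
    lcompl := ?_
    exch := ?_
    one_add := ?_
    add_one := ?_ }, rfl, rfl, rfl, ?_, ?_⟩
  · -- assoc
    intro a b c
    by_cases H : a.1 + b.1 + c.1 ≤ u
    · have hab : a.1 + b.1 ≤ u :=
        le_trans (le_add_of_nonneg_right c.2.1) H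
      have hbc : b.1 + c.1 ≤ u := by
        refine le_trans ?_ H
        rw [add_assoc]
        exact le_add_of_nonneg_left a.2.1
      have h1 : gammaAdd u a b = some ⟨a.1 + b.1, add_nonneg a.2.1 b.2.1, hab⟩ :=
        (gammaAdd_eq_some_iff u a b _).2 rfl
      have h2 : gammaAdd u b c = some ⟨b.1 + c.1, add_nonneg b.2.1 c.2.1, hbc⟩ :=
        (gammaAdd_eq_some_iff u b c _).2 rfl
      rw [h1, h2]
      show gammaAdd u _ c = gammaAdd u a _
      have h3 : gammaAdd u ⟨a.1 + b.1, add_nonneg a.2.1 b.2.1, hab⟩ c =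
          some ⟨a.1 + b.1 + c.1, add_nonneg (add_nonneg a.2.1 b.2.1) c.2.1, H⟩ :=
        (gammaAdd_eq_some_iff u _ _ _).2 rfl
      have h4 : gammaAdd u a ⟨b.1 + c.1, add_nonneg b.2.1 c.2.1, hbc⟩ =
          some ⟨a.1 + b.1 + c.1, add_nonneg (add_nonneg a.2.1 b.2.1) c.2.1, H⟩ := by
        refine (gammaAdd_eq_some_iff u _ _ _).2 ?_
        simp [add_assoc]
      rw [h3, h4]
    · -- both sides are none
      have L : (gammaAdd u a b).bind (fun x => gammaAdd u x c) = none := by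
        rcases h : gammaAdd u a b with _ | x
        · rfl
        · show gammaAdd u x c = none
          rcases h2 : gammaAdd u x c with _ | y
          · rfl
          · exfalso
            apply H
            have e1 := (gammaAdd_eq_some_iff u a b x).1 h
            have e2 := (gammaAdd_eq_some_iff u x c y).1 h2
            rw [← e1] at e2
            rw [e2]
            exact y.2.2
      have R : (gammaAdd u b c).bind (fun x => gammaAdd u a x) = none := by
        rcases h : gammaAdd u b c with _ | x
        · rfl
        · show gammaAdd u a x = none
          rcases h2 : gammaAdd u a x with _ | y
          · rfl
          · exfalso
            apply H
            have e1 := (gammaAdd_eq_some_iff u b c x).1 h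
            have e2 := (gammaAdd_eq_some_iff u a x y).1 h2
            rw [← e1] at e2
            rw [add_assoc, e2]
            exact y.2.2
      rw [L, R]
  · -- rcompl : d = -a + u
    intro a
    have hd0 : (0 : G) ≤ -a.1 + u := by
      have h := add_le_add_right a.2.2 (-a.1)
      rwa [neg_add_cancel] at h
    have hdu : -a.1 + u ≤ u := by
      calc -a.1 + u ≤ 0 + u := add_le_add_left (negNonpos a.2.1) u
        _ = u := zero_add u
    refine ⟨⟨-a.1 + u, hd0, hdu⟩, ?_, ?_⟩
    · exact (gammaAdd_eq_some_iff u a _ _).2 (by simp)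
    · intro y hy
      have := (gammaAdd_eq_some_iff u a y _).1 hy
      exact Subtype.ext (eq_neg_add_iff_add_eq.2 this)
  · -- lcompl : e = u - a
    intro a
    have hd0 : (0 : G) ≤ u - a.1 := sub_nonneg.2 a.2.2
    have hdu : u - a.1 ≤ u := sub_le_self u a.2.1
    refine ⟨⟨u - a.1, hd0, hdu⟩, ?_, ?_⟩
    · exact (gammaAdd_eq_some_iff u _ a _).2 (by simp)
    · intro y hy
      have := (gammaAdd_eq_some_iff u y a _).1 hy
      exact Subtype.ext (eq_sub_iff_add_eq.2 this)
  · -- exch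
    intro a b s hab
    have e := (gammaAdd_eq_some_iff u a b s).1 hab
    constructor
    · refine ⟨⟨s.1 - a.1, ?_, ?_⟩, ?_⟩
      · rw [sub_nonneg, ← e]; exact le_add_of_nonneg_right b.2.1
      · rw [sub_le_iff_le_add]
        exact le_trans s.2.2 (le_add_of_nonneg_right a.2.1)
      · exact (gammaAdd_eq_some_iff u _ a s).2 (by simp)
    · refine ⟨⟨-b.1 + s.1, ?_, ?_⟩, ?_⟩
      · have h2 : b.1 ≤ s.1 := by rw [← e]; exact le_add_of_nonneg_left a.2.1
        have h3 := add_le_add_right h2 (-b.1)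
        rwa [neg_add_cancel] at h3
      · calc -b.1 + s.1 ≤ 0 + s.1 := add_le_add_left (negNonpos b.2.1) _
          _ = s.1 := zero_add _
          _ ≤ u := s.2.2
      · exact (gammaAdd_eq_some_iff u b _ s).2 (by simp)
  · -- one_add
    intro a h
    rw [Option.isSome_iff_exists] at h
    obtain ⟨c, hc⟩ := h
    have e := (gammaAdd_eq_some_iff u _ a c).1 hc
    apply Subtype.ext
    simp only
    have hle : u + a.1 ≤ u := e ▸ c.2.2
    have : a.1 ≤ 0 := by
      calc a.1 = -u + (u + a.1) := by rw [neg_add_cancel_left]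
        _ ≤ -u + u := add_le_add_right hle _
        _ = 0 := neg_add_cancel u
    exact le_antisymm this a.2.1
  · -- add_one
    intro a h
    rw [Option.isSome_iff_exists] at h
    obtain ⟨c, hc⟩ := h
    have e := (gammaAdd_eq_some_iff u a _ c).1 hc
    apply Subtype.ext
    simp only
    have hle : a.1 + u ≤ u := e ▸ c.2.2
    have : a.1 ≤ 0 := by
      calc a.1 = (a.1 + u) + -u := by rw [add_neg_cancel_right]
        _ ≤ u + -u := add_le_add_left hle _
        _ = 0 := add_neg_cancel u
    exact le_antisymm this a.2.1
  · -- left complement characterization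
    intro a b
    rw [gammaAdd_eq_some_iff]
    exact eq_sub_iff_add_eq.symm
  · -- right complement characterization
    intro a b
    rw [gammaAdd_eq_some_iff]
    exact eq_neg_add_iff_add_eq.symm
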